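/- (Asynchronous Convergence Theorem) Let ι be a finite nonempty index type, let each Xᵢ be a metric space, let X = Π_{i ∈ ι} Xᵢ with the product topology, and let f : X → X with components fᵢ : X → Xᵢ. Suppose there are sets B(k)ᵢ ⊆ Xᵢ for each k ∈ ℕ and i ∈ ι, with X(k) = { x ∈ X | ∀ i, xᵢ ∈ B(k)ᵢ } (box condition), satisfying: (nestedness) X(k+1) ⊆ X(k) for all k; (synchronous convergence) f maps X(k) into X(k+1) for all k, and for any sequence (yᵏ) with yᵏ ∈ X(k) for every k, every cluster point of (yᵏ) is a fixed point of f. Consider an asynchronous iteration x : ℕ → X where for each i there is an infinite set Tⁱ ⊆ ℕ of update times and delay functions τⁱⱼ : ℕ → ℕ with τⁱⱼ(t) ≤ t and τⁱⱼ(t) → ∞ as t → ∞, such that x(t+1)ᵢ = fᵢ( (x(τⁱⱼ(t))ⱼ)_{j ∈ ι} ) for t ∈ Tⁱ and x(t+1)ᵢ = x(t)ᵢ for t ∉ Tⁱ. If the initial estimate satisfies x(0) ∈ X(0) (and all initial delayed values lie in X(0)), then every cluster point of the sequence (x(t)) is a fixed point of f. -/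
import Mathlib


open Filter

/-- The Asynchronous Convergence Theorem (Bertsekas–Tsitsiklis): given a finite
product of metric spaces `X = Π i, Xi i` with the product topology, a map
`f : X → X`, and a nested family of box sets `X(k) = {x | ∀ i, x i ∈ B k i}`
satisfying the synchronous convergence condition (`f` maps `X(k)` into
`X(k+1)`, and every cluster point of any sequence `yᵏ ∈ X(k)` is a fixed point
of `f`), any asynchronous iteration `x : ℕ → X` — where each component `i` is
updated at an infinite set of times `T i` using delayed information
`τ i j t ≤ t` with `τ i j t → ∞`, and is left unchanged otherwise — that starts
in `X(0)` has the property that every cluster point of `(x t)` is a fixed point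
of `f`. -/
theorem asynchronous_convergence_theorem
    {ι : Type*} [Fintype ι] [Nonempty ι]
    {Xi : ι → Type*} [∀ i, MetricSpace (Xi i)]
    (f : (∀ i, Xi i) → (∀ i, Xi i))
    (B : ℕ → ∀ i, Set (Xi i))
    (hnested : ∀ k (x : ∀ i, Xi i), (∀ i, x i ∈ B (k + 1) i) → ∀ i, x i ∈ B k i)
    (hsync : ∀ k (x : ∀ i, Xi i), (∀ i, x i ∈ B k i) → ∀ i, f x i ∈ B (k + 1) i)
    (hfix : ∀ y : ℕ → ∀ i, Xi i, (∀ k i, y k i ∈ B k i) →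
      ∀ p : ∀ i, Xi i, MapClusterPt p atTop y → f p = p)
    (x : ℕ → ∀ i, Xi i)
    (T : ι → Set ℕ) (hT : ∀ i, (T i).Infinite)
    (τ : ι → ι → ℕ → ℕ)
    (hτle : ∀ i j t, τ i j t ≤ t)
    (hτtop : ∀ i j, Tendsto (τ i j) atTop atTop)
    (hupd : ∀ i t, t ∈ T i → x (t + 1) i = f (fun j => x (τ i j t) j) i)
    (hnoupd : ∀ i t, t ∉ T i → x (t + 1) i = x t i)
    (hinit : ∀ i, x 0 i ∈ B 0 i) :
    ∀ p : ∀ i, Xi i, MapClusterPt p atTop x → f p = p := by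
  -- Step 1: all iterates stay in B 0
  have hall0 : ∀ t i, x t i ∈ B 0 i := by
    intro t
    induction t using Nat.strong_induction_on with
    | _ t ih =>
      match t with
      | 0 => exact hinit
      | Nat.succ t =>
        intro i
        by_cases h : t ∈ T i
        · rw [hupd i t h]
          exact hnested 0 _ (hsync 0 _ fun j =>
            ih (τ i j t) (Nat.lt_succ_of_le (hτle i j t)) j) i
        · rw [hnoupd i t h]
          exact ih t (Nat.lt_succ_self t) i
  -- Step 2: eventually all iterates are in B k
  have key : ∀ k, ∃ N, ∀ t, N ≤ t → ∀ i, x t i ∈ B k i := by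
    intro k
    induction k with
    | zero => exact ⟨0, fun t _ => hall0 t⟩
    | succ k ihk =>
      obtain ⟨N, hN⟩ := ihk
      have hev : ∀ᶠ t in atTop, (∀ i j, N ≤ τ i j t) ∧ N ≤ t :=
        (eventually_all.2 fun i => eventually_all.2 fun j =>
          (hτtop i j).eventually_ge_atTop N).and (eventually_ge_atTop N)
      obtain ⟨M, hM⟩ := eventually_atTop.1 hev
      have hs : ∀ i, ∃ s, s ∈ T i ∧ M ≤ s := fun i =>
        ((hT i).exists_gt M).imp fun s hs => ⟨hs.1, hs.2.le⟩
      choose s hsT hsM using hs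
      have hcomp : ∀ i t, s i + 1 ≤ t → x t i ∈ B (k + 1) i := by
        intro i t ht
        induction t, ht using Nat.le_induction with
        | base =>
          rw [hupd i (s i) (hsT i)]
          exact hsync k _ (fun j => hN _ ((hM (s i) (hsM i)).1 i j) j) i
        | succ t ht ih =>
          by_cases h : t ∈ T i
          · rw [hupd i t h]
            have hMt : M ≤ t := le_trans (hsM i) (le_trans (Nat.le_succ _) ht)
            exact hsync k _ (fun j => hN _ ((hM t hMt).1 i j) j) i
          · rw [hnoupd i t h]
            exact ih
      refine ⟨Finset.univ.sup s + 1, fun t ht i => hcomp i t ?_⟩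
      exact le_trans (Nat.succ_le_succ (Finset.le_sup (Finset.mem_univ i))) ht
  -- Step 3: extract a convergent subsequence and apply hfix
  intro p hp
  obtain ⟨φ, hφ, hφtend⟩ := TopologicalSpace.FirstCountableTopology.tendsto_subseq hp
  choose N hNspec using key
  set m : ℕ → ℕ := fun k => max (N k) k with hm
  set y : ℕ → ∀ i, Xi i := fun k => x (φ (m k)) with hy
  have hyB : ∀ k i, y k i ∈ B k i := by
    intro k i
    exact hNspec k (φ (m k)) (le_trans (le_max_left _ _) (hφ.le_apply)) i
  have hmtop : Tendsto m atTop atTop :=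
    tendsto_atTop_mono (fun k => le_max_right (N k) k) tendsto_id
  have hytend : Tendsto y atTop (nhds p) := hφtend.comp hmtop
  exact hfix y hyB p hytend.mapClusterPt
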